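/- Let p : ℝ → ℝ be a continuously differentiable, everywhere positive probability density with respect to Lebesgue measure, and let s : ℝ → ℝ be continuously differentiable. Assume that s(x)·p(x) → 0 as x → ±∞ and that the functions s²·p, s′·p, (p′/p)²·p, and s·p′ are all Lebesgue-integrable on ℝ. Then ∫ (s(x) − p′(x)/p(x))²·p(x) dx = ∫ s(x)²·p(x) dx + 2∫ s′(x)·p(x) dx + ∫ (p′(x)/p(x))²·p(x) dx. -/

import Mathlib

open MeasureTheory Filter

/-- Score-matching identity: for a `C¹` positive probability density `p` on `ℝ` and a `C¹`
function `s` with `s·p → 0` at `±∞` and the relevant integrability conditions, expanding the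
square and integrating the cross term by parts gives
`∫ (s − p′/p)² p = ∫ s² p + 2 ∫ s′ p + ∫ (p′/p)² p`. -/
theorem score_matching_identity (p s : ℝ → ℝ)
    (hp : ContDiff ℝ 1 p) (hppos : ∀ x, 0 < p x)
    (hpdens : ∫ x, p x = 1)
    (hs : ContDiff ℝ 1 s)
    (htop : Tendsto (fun x => s x * p x) atTop (nhds 0))
    (hbot : Tendsto (fun x => s x * p x) atBot (nhds 0))
    (h1 : Integrable (fun x => (s x) ^ 2 * p x))
    (h2 : Integrable (fun x => deriv s x * p x))
    (h3 : Integrable (fun x => (deriv p x / p x) ^ 2 * p x))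
    (h4 : Integrable (fun x => s x * deriv p x)) :
    ∫ x, (s x - deriv p x / p x) ^ 2 * p x =
      (∫ x, (s x) ^ 2 * p x) + 2 * (∫ x, deriv s x * p x) +
        ∫ x, (deriv p x / p x) ^ 2 * p x := by
  have hds : ∀ x, HasDerivAt s (deriv s x) x := fun x =>
    (hs.differentiable one_ne_zero x).hasDerivAt
  have hdp : ∀ x, HasDerivAt p (deriv p x) x := fun x =>
    (hp.differentiable one_ne_zero x).hasDerivAt
  have hprod : ∀ x, HasDerivAt (fun x => s x * p x)
      (deriv s x * p x + s x * deriv p x) x := fun x => (hds x).mul (hdp x)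
  have hibp : ∫ x, (deriv s x * p x + s x * deriv p x) = 0 := by
    simpa using integral_of_hasDerivAt_of_tendsto hprod (h2.add h4) hbot htop
  rw [integral_add h2 h4] at hibp
  have hcross : ∫ x, s x * deriv p x = -∫ x, deriv s x * p x := by linarith
  have hexp : ∀ x, (s x - deriv p x / p x) ^ 2 * p x
      = (s x) ^ 2 * p x - 2 * (s x * deriv p x) + (deriv p x / p x) ^ 2 * p x := by
    intro x
    have h := (hppos x).ne'
    field_simp
    ring
  calc ∫ x, (s x - deriv p x / p x) ^ 2 * p x
      = ∫ x, ((s x) ^ 2 * p x - 2 * (s x * deriv p x) + (deriv p x / p x) ^ 2 * p x) := by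
        simp only [hexp]
    _ = (∫ x, (s x) ^ 2 * p x) - 2 * (∫ x, s x * deriv p x) + ∫ x, (deriv p x / p x) ^ 2 * p x := by
        have hI : Integrable (fun x => s x ^ 2 * p x - 2 * (s x * deriv p x)) := by
          exact h1.sub (h4.const_mul 2)
        rw [integral_add hI h3, integral_sub h1 (h4.const_mul 2),
          MeasureTheory.integral_const_mul]
    _ = _ := by rw [hcross]; ring
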